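/- Let M = [[A₁,A₂],[A₃,A₄]] be a 4×4 rational matrix in 2×2 blocks with all A_j invertible and the Type III relation A₄ = −(det A₁/det A₂)·A₃A₁⁻¹A₂ (where det A₂ = det A₃ ≠ 0). If M² is block diagonal, then A₁² = (det A₁/det A₂)·A₂A₃, and consequently M² = (1/det A₁)·diag(A₁², A₂⁻¹A₁²A₂). -/

import Mathlib

open Matrix

/-- If `M = [[A₁,A₂],[A₃,A₄]]` is Type III (so `det A₂ = det A₃ ≠ 0`,
`det A₁ + det A₃ = 1`, `A₄ = −(det A₁/det A₂)A₃A₁⁻¹A₂`) and `M²` is block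
diagonal, then `A₁² = (det A₁/det A₂)A₂A₃`, and the diagonal blocks of `M²`
are `(1/det A₁)A₁²` and `(1/det A₁)A₂⁻¹A₁²A₂`. -/
theorem stmt_12 (A1 A2 A3 A4 : Matrix (Fin 2) (Fin 2) ℚ)
    (h1 : A1.det ≠ 0) (h2 : A2.det ≠ 0) (h23 : A2.det = A3.det)
    (hsum : A1.det + A3.det = 1)
    (h4 : A4 = -((A1.det / A2.det) • (A3 * A1⁻¹ * A2)))
    (hbd1 : A1 * A2 + A2 * A4 = 0) (hbd2 : A3 * A1 + A4 * A3 = 0) :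
    A1 * A1 = (A1.det / A2.det) • (A2 * A3) ∧
    A1 * A1 + A2 * A3 = (A1.det)⁻¹ • (A1 * A1) ∧
    A3 * A2 + A4 * A4 = (A1.det)⁻¹ • (A2⁻¹ * (A1 * A1) * A2) := by
  have hu1 : IsUnit A1.det := isUnit_iff_ne_zero.mpr h1
  have hu2 : IsUnit A2.det := isUnit_iff_ne_zero.mpr h2
  set c : ℚ := A1.det / A2.det with hc
  have hcne : c ≠ 0 := div_ne_zero h1 h2
  -- From hbd1: A1*A2 = c • (A2*(A3*A1⁻¹*A2))
  have e1 : A1 * A2 = c • (A2 * (A3 * A1⁻¹ * A2)) := by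
    have := hbd1
    rw [h4] at this
    have : A1 * A2 + -(c • (A2 * (A3 * A1⁻¹ * A2))) = 0 := by
      simpa [Matrix.mul_smul, Matrix.mul_neg] using this
    linear_combination (norm := noncomm_ring) this
  have e2 : A1 = c • (A2 * A3 * A1⁻¹) := by
    have := congrArg (· * A2⁻¹) e1
    simpa [Matrix.mul_assoc, Matrix.mul_nonsing_inv_cancel_right _ _ hu2,
      Matrix.smul_mul] using this
  have key : A1 * A1 = c • (A2 * A3) := by
    calc A1 * A1 = (c • (A2 * A3 * A1⁻¹)) * A1 := by rw [← e2]
    _ = c • (A2 * A3) := by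
        rw [Matrix.smul_mul, Matrix.nonsing_inv_mul_cancel_right _ _ hu1]
  have hd2 : A2.det = 1 - A1.det := by rw [h23]; linarith
  refine ⟨key, ?_, ?_⟩
  · rw [key, smul_smul]
    have h : ∀ X : Matrix (Fin 2) (Fin 2) ℚ, c • X + X = (c + 1) • X := fun X => by
      rw [add_smul, one_smul]
    rw [h]
    congr 1
    rw [hc, hd2]
    have h2' : (1:ℚ) - A1.det ≠ 0 := hd2 ▸ h2
    field_simp
    ring
  · -- A4*A4 = c • (A3*A2)
    have hA23 : A2 * A3 = c⁻¹ • (A1 * A1) := by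
      rw [key, smul_smul, inv_mul_cancel₀ hcne, one_smul]
    have e4 : A4 * A4 = c • (A3 * A2) := by
      rw [h4]
      have : A3 * A1⁻¹ * A2 * (A3 * A1⁻¹ * A2)
          = A3 * (A1⁻¹ * (A2 * A3) * A1⁻¹) * A2 := by
        simp [Matrix.mul_assoc]
      rw [Matrix.neg_mul, Matrix.mul_neg, neg_neg, Matrix.smul_mul,
        Matrix.mul_smul, smul_smul, this, hA23]
      rw [Matrix.mul_smul, Matrix.smul_mul, Matrix.mul_smul, Matrix.smul_mul, smul_smul]
      have hinv : A1⁻¹ * (A1 * A1) * A1⁻¹ = 1 := by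
        rw [← Matrix.mul_assoc, Matrix.nonsing_inv_mul _ hu1, Matrix.one_mul,
          Matrix.mul_nonsing_inv _ hu1]
      rw [hinv]
      congr 1
      · field_simp
      · simp
    have erhs : A2⁻¹ * (A1 * A1) * A2 = c • (A3 * A2) := by
      rw [key, Matrix.mul_smul, Matrix.smul_mul, ← Matrix.mul_assoc,
        Matrix.nonsing_inv_mul _ hu2, Matrix.one_mul]
    rw [e4, erhs, smul_smul]
    have h : ∀ X : Matrix (Fin 2) (Fin 2) ℚ, X + c • X = (1 + c) • X := fun X => by
      rw [add_smul, one_smul]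
    rw [h]
    congr 1
    rw [hc, hd2]
    have h2' : (1:ℚ) - A1.det ≠ 0 := hd2 ▸ h2
    field_simp
    ring
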